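/- Let V be a finite type and let F be a nonempty superset-closed family of finsets of V. If k is a natural number such that |M1 ∪ M2| ≤ k for every pair of minimal members M1, M2 of F, then for every natural number ℓ with ℓ ≥ k the ℓ-TAR graph of F is connected. -/

import Mathlib

variable {V : Type*} [Fintype V] [DecidableEq V]

/-- A family of finsets is superset-closed if it is closed under taking supersets. -/
def SupersetClosed (F : Finset (Finset V)) : Prop :=
  ∀ ⦃S T : Finset V⦄, S ∈ F → S ⊆ T → T ∈ F

/-- A minimal member of a family: a member no proper subset of which is a member. -/
def IsMinimalMem (F : Finset (Finset V)) (M : Finset V) : Prop :=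
  M ∈ F ∧ ∀ M' : Finset V, M' ⊂ M → M' ∉ F

/-- The TAR graph of a family of finsets: vertices are the members of the family,
two members being adjacent iff their symmetric difference has exactly one element. -/
def TARGraph (F : Finset (Finset V)) : SimpleGraph {S : Finset V // S ∈ F} where
  Adj S T := (symmDiff S.1 T.1).card = 1
  symm := ⟨fun S T h => by show (symmDiff T.1 S.1).card = 1; rwa [symmDiff_comm]⟩
  loopless := ⟨fun S h => by simp [symmDiff_self] at h⟩

instance (F : Finset (Finset V)) : DecidableRel (TARGraph F).Adj :=
  fun S T => inferInstanceAs (Decidable ((symmDiff S.1 T.1).card = 1))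

/-- The `k`-TAR graph: the subgraph of the TAR graph induced on members of
cardinality at most `k`. -/
def kTARGraph (F : Finset (Finset V)) (k : ℕ) :
    SimpleGraph {S : Finset V // S ∈ F ∧ S.card ≤ k} where
  Adj S T := (symmDiff S.1 T.1).card = 1
  symm := ⟨fun S T h => by show (symmDiff T.1 S.1).card = 1; rwa [symmDiff_comm]⟩
  loopless := ⟨fun S h => by simp [symmDiff_self] at h⟩

lemma exists_minimal_mem (F : Finset (Finset V)) {S : Finset V} (hS : S ∈ F) :
    ∃ M, IsMinimalMem F M ∧ M ⊆ S := by
  induction S using Finset.strongInductionOn with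
  | _ S ih =>
    by_cases h : ∀ M' ⊂ S, M' ∉ F
    · exact ⟨S, ⟨hS, h⟩, subset_rfl⟩
    · push_neg at h
      obtain ⟨M', hM'sub, hM'⟩ := h
      obtain ⟨M, hM, hsub⟩ := ih M' hM'sub hM'
      exact ⟨M, hM, hsub.trans hM'sub.subset⟩

lemma reach_of_subset (F : Finset (Finset V)) (hsup : SupersetClosed F) (ℓ : ℕ)
    {A B : Finset V} (hA : A ∈ F) (hAB : A ⊆ B) (hB : B.card ≤ ℓ) :
    (kTARGraph F ℓ).Reachable ⟨A, hA, (Finset.card_le_card hAB).trans hB⟩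
      ⟨B, hsup hA hAB, hB⟩ := by
  induction B using Finset.strongInductionOn with
  | _ B ih =>
    rcases eq_or_ssubset_of_subset hAB with rfl | hss
    · rfl
    · obtain ⟨a, haB, haA⟩ := Finset.exists_of_ssubset hss
      have hAB' : A ⊆ B.erase a := fun x hx =>
        Finset.mem_erase.mpr ⟨fun h => haA (h ▸ hx), hAB hx⟩
      have hB' : (B.erase a).card ≤ ℓ :=
        le_trans (Finset.card_le_card (Finset.erase_subset _ _)) hB
      have hr := ih (B.erase a) (Finset.erase_ssubset haB) hAB' hB'
      refine hr.trans (SimpleGraph.Adj.reachable ?_)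
      show (symmDiff (B.erase a) B).card = 1
      have : symmDiff (B.erase a) B = {a} := by
        ext x
        simp only [Finset.mem_symmDiff, Finset.mem_erase, Finset.mem_singleton]
        constructor
        · rintro (⟨⟨_, hx⟩, hx'⟩ | ⟨hx, hx'⟩)
          · exact absurd hx hx'
          · by_contra h; exact hx' ⟨h, hx⟩
        · rintro rfl; exact Or.inr ⟨haB, fun h => h.1 rfl⟩
      rw [this, Finset.card_singleton]

theorem stmt15 (F : Finset (Finset V)) (hne : F.Nonempty) (hsup : SupersetClosed F)
    (k : ℕ)
    (hk : ∀ M1 M2 : Finset V, IsMinimalMem F M1 → IsMinimalMem F M2 →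
      (M1 ∪ M2).card ≤ k) :
    ∀ ℓ : ℕ, k ≤ ℓ → (kTARGraph F ℓ).Connected := by
  intro ℓ hℓ
  obtain ⟨S0, hS0⟩ := hne
  obtain ⟨M0, hM0, _⟩ := exists_minimal_mem F hS0
  have hcard : ∀ M, IsMinimalMem F M → M.card ≤ ℓ := fun M hM => by
    have := hk M M hM hM
    rw [Finset.union_self] at this
    exact this.trans hℓ
  rw [SimpleGraph.connected_iff]
  refine ⟨?_, ?_⟩
  · intro S T
    -- reach from any vertex to a minimal member, then through unions
    have key : ∀ S : {S : Finset V // S ∈ F ∧ S.card ≤ ℓ},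
        (kTARGraph F ℓ).Reachable S ⟨M0, hM0.1, hcard M0 hM0⟩ := by
      intro ⟨S, hSF, hSc⟩
      obtain ⟨M, hM, hMS⟩ := exists_minimal_mem F hSF
      have h1 : (kTARGraph F ℓ).Reachable ⟨M, hM.1, hcard M hM⟩ ⟨S, hSF, hSc⟩ := by
        have := reach_of_subset F hsup ℓ hM.1 hMS hSc
        convert this using 2
      have hUc : (M ∪ M0).card ≤ ℓ := (hk M M0 hM hM0).trans hℓ
      have h2 : (kTARGraph F ℓ).Reachable ⟨M, hM.1, hcard M hM⟩
          ⟨M ∪ M0, hsup hM.1 Finset.subset_union_left, hUc⟩ := by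
        have := reach_of_subset F hsup ℓ hM.1 Finset.subset_union_left hUc
        convert this using 2
      have h3 : (kTARGraph F ℓ).Reachable ⟨M0, hM0.1, hcard M0 hM0⟩
          ⟨M ∪ M0, hsup hM0.1 Finset.subset_union_right, hUc⟩ := by
        have := reach_of_subset F hsup ℓ hM0.1 Finset.subset_union_right hUc
        convert this using 2
      exact h1.symm.trans (h2.trans h3.symm)
    exact (key S).trans (key T).symm
  · exact ⟨⟨M0, hM0.1, hcard M0 hM0⟩⟩
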